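/- A connected graph G on n vertices has a Hamiltonian path if and only if one can delete m − n + 1 rows from its edge-vertex incidence matrix so that the remaining matrix has the consecutive ones property for both rows and columns (the SC1P). -/

import Mathlib

/-- A binary matrix `M` has the consecutive ones property for rows if the columns
can be linearly ordered so that the ones in every row are consecutive. -/
def HasC1PRows {α β : Type*} (M : α → β → Bool) : Prop :=
  ∃ f : β → ℕ, Function.Injective f ∧
    ∀ (i : α) (j1 j2 j3 : β), f j1 < f j2 → f j2 < f j3 →
      M i j1 = true → M i j3 = true → M i j2 = true

/-- The simultaneous consecutive ones property: C1P for rows and for columns. -/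
def HasSC1P {α β : Type*} (M : α → β → Bool) : Prop :=
  HasC1PRows M ∧ HasC1PRows (fun j i => M i j)

section Aux

open SimpleGraph List Finset

set_option linter.unusedSectionVars false

variable {V : Type*} [DecidableEq V] {G : SimpleGraph V} {a b : V}

private lemma edges_getElem' (p : G.Walk a b) (k : ℕ) (hk : k < p.length) :
    p.edges[k]'(by simp [hk]) =
      s(p.support[k]'(by simp; omega), p.support[k+1]'(by simp; omega)) := by
  have hd : k < p.darts.length := by simp [hk]
  have h1 : p.edges[k]'(by simp [hk]) = (p.darts[k]'hd).edge := by
    simp [SimpleGraph.Walk.edges]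
  have h2 : (p.darts[k]'hd).fst = p.support[k]'(by simp; omega) := by
    have h := List.getElem_of_eq p.map_fst_darts (i := k) (by simpa using hk)
    simpa using h
  have h3 : (p.darts[k]'hd).snd = p.support[k+1]'(by simp; omega) := by
    have h := List.getElem_of_eq p.map_snd_darts (i := k) (by simpa using hk)
    simpa [List.getElem_tail] using h
  rw [h1, ← h2, ← h3]
  rfl

private lemma walk_of_chain' :
    ∀ (l : List V) (a : V), List.Chain G.Adj a l →
      ∃ (b : V) (p : G.Walk a b), p.support = a :: l := by
  intro l
  induction l with
  | nil => exact fun a _ => ⟨a, Walk.nil, by simp⟩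
  | cons c l ih =>
    intro a h
    have h : G.Adj a c ∧ List.Chain G.Adj c l := List.isChain_cons_cons.1 h
    obtain ⟨b, p, hp⟩ := ih c h.2
    exact ⟨b, Walk.cons h.1 p, by simp [hp]⟩

private lemma card_le_of_connected' {V : Type*} [Fintype V] [DecidableEq V] (G : SimpleGraph V)
    [DecidableRel G.Adj] (h : G.Connected) :
    Fintype.card V ≤ G.edgeFinset.card + 1 := by
  obtain ⟨r⟩ := h.nonempty
  have hex : ∀ v, v ≠ r → ∃ w, G.Adj v w ∧ G.dist w r < G.dist v r := by
    intro v hv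
    obtain ⟨p, hp⟩ := h.exists_walk_length_eq_dist v r
    cases p with
    | nil => exact absurd rfl hv
    | cons hadj q =>
      refine ⟨_, hadj, ?_⟩
      have h1 := SimpleGraph.dist_le q
      simp only [Walk.length_cons] at hp
      omega
  classical
  let w : V → V := fun v => if hv : v = r then r else (hex v hv).choose
  have hw : ∀ v, v ≠ r → G.Adj v (w v) ∧ G.dist (w v) r < G.dist v r := by
    intro v hv
    simpa [w, hv] using (hex v hv).choose_spec
  have hinj : Set.InjOn (fun v => s(v, w v)) (Finset.univ.erase r : Finset V) := by
    intro u hu v hv huv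
    simp only [Finset.coe_erase, Set.mem_diff, Finset.mem_erase] at hu hv
    have hu' : u ≠ r := by simpa using hu.2
    have hv' : v ≠ r := by simpa using hv.2
    rcases Sym2.eq_iff.1 huv with ⟨h1, _⟩ | ⟨h1, h2⟩
    · exact h1
    · exfalso
      have d1 := (hw u hu').2
      have d2 := (hw v hv').2
      rw [h2] at d1
      rw [← h1] at d2
      omega
  have hmap : ∀ v ∈ Finset.univ.erase r, s(v, w v) ∈ G.edgeFinset := by
    intro v hv
    rw [SimpleGraph.mem_edgeFinset, SimpleGraph.mem_edgeSet]
    exact (hw v (Finset.mem_erase.1 hv).1).1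
  have := Finset.card_le_card_of_injOn _ hmap hinj
  have hcard : (Finset.univ.erase r).card = Fintype.card V - 1 := by
    rw [Finset.card_erase_of_mem (Finset.mem_univ r), Finset.card_univ]
  have hpos : 1 ≤ Fintype.card V := Fintype.card_pos_iff.2 ⟨r⟩
  omega

end Aux

/-- A connected graph on `n` vertices and `m` edges has a Hamiltonian path iff one
can delete `m - n + 1` rows of its edge-vertex incidence matrix so that the
remaining matrix has the SC1P. -/
theorem hamiltonianPath_iff_sc1s_row_deletion {V : Type*} [Fintype V] [DecidableEq V]
    (G : SimpleGraph V) [DecidableRel G.Adj] (hconn : G.Connected) :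
    (∃ (a b : V) (p : G.Walk a b), p.IsHamiltonian) ↔
    ∃ S : Finset (Sym2 V), S ⊆ G.edgeFinset ∧
      S.card = G.edgeFinset.card + 1 - Fintype.card V ∧
      HasSC1P (fun (e : {e : Sym2 V // e ∈ G.edgeFinset ∧ e ∉ S}) (v : V) =>
        decide (v ∈ e.val)) := by
  classical
  open SimpleGraph List Finset in
  constructor
  · rintro ⟨a, b, p, hp⟩
    have hpath : p.IsPath := hp.isPath
    have hnd : p.support.Nodup := hpath.support_nodup
    have hednd : p.edges.Nodup := hpath.edges_nodup
    have hmem : ∀ v : V, v ∈ p.support := fun v => hp.mem_support v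
    have hlen : p.support.length = Fintype.card V := by
      have h1 : p.support.toFinset = Finset.univ := by
        ext v; simp [hmem v]
      have h2 := List.toFinset_card_of_nodup hnd
      rw [h1, Finset.card_univ] at h2
      omega
    have hplen : p.length + 1 = Fintype.card V := by
      rw [← hlen, SimpleGraph.Walk.length_support]
    have hE'sub : p.edges.toFinset ⊆ G.edgeFinset := by
      intro e he
      rw [List.mem_toFinset] at he
      exact SimpleGraph.mem_edgeFinset.2 (p.edges_subset_edgeSet he)
    have hE'card : p.edges.toFinset.card = p.length := by
      rw [List.toFinset_card_of_nodup hednd, SimpleGraph.Walk.length_edges]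
    refine ⟨G.edgeFinset \ p.edges.toFinset, Finset.sdiff_subset, ?_, ?_, ?_⟩
    · have hle := Finset.card_le_card hE'sub
      rw [Finset.card_sdiff_of_subset hE'sub, hE'card]
      omega
    · -- rows: order vertices by position in the path
      refine ⟨fun v => p.support.idxOf v, ?_, ?_⟩
      · intro v1 v2 h
        exact (List.idxOf_inj (hmem v1)).1 h
      · rintro ⟨et, hetE, hetS⟩ j1 j2 j3 h12 h23 h1 h3
        have het : et ∈ p.edges := by
          by_contra hc
          exact hetS (Finset.mem_sdiff.2 ⟨hetE, fun hm => hc (List.mem_toFinset.1 hm)⟩)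
        obtain ⟨k, hk, hke⟩ := List.getElem_of_mem het
        have hk' : k < p.length := by simpa using hk
        rw [edges_getElem' p k hk'] at hke
        have h1' : j1 ∈ et := by simpa using h1
        have h3' : j3 ∈ et := by simpa using h3
        rw [← hke] at h1' h3'
        rw [Sym2.mem_iff] at h1' h3'
        have e1 : p.support.idxOf (p.support[k]'(by simp; omega)) = k :=
          List.Nodup.idxOf_getElem hnd k _
        have e2 : p.support.idxOf (p.support[k+1]'(by simp; omega)) = k + 1 :=
          List.Nodup.idxOf_getElem hnd (k+1) _
        exfalso
        simp only at h12 h23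
        have hv1 : p.support.idxOf j1 = k ∨ p.support.idxOf j1 = k + 1 := by
          rcases h1' with rfl | rfl
          · exact Or.inl e1
          · exact Or.inr e2
        have hv3 : p.support.idxOf j3 = k ∨ p.support.idxOf j3 = k + 1 := by
          rcases h3' with rfl | rfl
          · exact Or.inl e1
          · exact Or.inr e2
        omega
    · -- columns: order edges by position in the path
      refine ⟨fun i => p.edges.idxOf i.val, ?_, ?_⟩
      · rintro ⟨e1, he1E, he1S⟩ ⟨e2, he2E, he2S⟩ h
        have hm1 : e1 ∈ p.edges := by
          by_contra hc
          exact he1S (Finset.mem_sdiff.2 ⟨he1E, fun hm => hc (List.mem_toFinset.1 hm)⟩)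
        have hm2 : e2 ∈ p.edges := by
          by_contra hc
          exact he2S (Finset.mem_sdiff.2 ⟨he2E, fun hm => hc (List.mem_toFinset.1 hm)⟩)
        exact Subtype.ext ((List.idxOf_inj hm1).1 h)
      · rintro v ⟨e1, he1E, he1S⟩ ⟨e2, he2E, he2S⟩ ⟨e3, he3E, he3S⟩ h12 h23 h1 h3
        have hm1 : e1 ∈ p.edges := by
          by_contra hc
          exact he1S (Finset.mem_sdiff.2 ⟨he1E, fun hm => hc (List.mem_toFinset.1 hm)⟩)
        have hm3 : e3 ∈ p.edges := by
          by_contra hc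
          exact he3S (Finset.mem_sdiff.2 ⟨he3E, fun hm => hc (List.mem_toFinset.1 hm)⟩)
        obtain ⟨k1, hk1, hke1⟩ := List.getElem_of_mem hm1
        obtain ⟨k3, hk3, hke3⟩ := List.getElem_of_mem hm3
        have hi1 : p.edges.idxOf e1 = k1 := by
          rw [← hke1]; exact List.Nodup.idxOf_getElem hednd k1 _
        have hi3 : p.edges.idxOf e3 = k3 := by
          rw [← hke3]; exact List.Nodup.idxOf_getElem hednd k3 _
        have hk1' : k1 < p.length := by simpa using hk1
        have hk3' : k3 < p.length := by simpa using hk3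
        rw [edges_getElem' p k1 hk1'] at hke1
        rw [edges_getElem' p k3 hk3'] at hke3
        have h1' : v ∈ e1 := by simpa using h1
        have h3' : v ∈ e3 := by simpa using h3
        rw [← hke1, Sym2.mem_iff] at h1'
        rw [← hke3, Sym2.mem_iff] at h3'
        have e1i : p.support.idxOf (p.support[k1]'(by simp; omega)) = k1 :=
          List.Nodup.idxOf_getElem hnd k1 _
        have e2i : p.support.idxOf (p.support[k1+1]'(by simp; omega)) = k1 + 1 :=
          List.Nodup.idxOf_getElem hnd (k1+1) _
        have e3i : p.support.idxOf (p.support[k3]'(by simp; omega)) = k3 :=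
          List.Nodup.idxOf_getElem hnd k3 _
        have e4i : p.support.idxOf (p.support[k3+1]'(by simp; omega)) = k3 + 1 :=
          List.Nodup.idxOf_getElem hnd (k3+1) _
        exfalso
        simp only [hi1, hi3] at h12 h23
        have hv1 : p.support.idxOf v = k1 ∨ p.support.idxOf v = k1 + 1 := by
          rcases h1' with rfl | rfl
          · exact Or.inl e1i
          · exact Or.inr e2i
        have hv3 : p.support.idxOf v = k3 ∨ p.support.idxOf v = k3 + 1 := by
          rcases h3' with rfl | rfl
          · exact Or.inl e3i
          · exact Or.inr e4i
        omega
  · rintro ⟨S, hSsub, hScard, ⟨f, hfinj, hfrow⟩, -⟩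
    have hn1 : 1 ≤ Fintype.card V := Fintype.card_pos_iff.2 hconn.nonempty
    have hm : Fintype.card V ≤ G.edgeFinset.card + 1 := card_le_of_connected' G hconn
    letI : LinearOrder V := LinearOrder.lift' f hfinj
    have hlt : ∀ u v : V, u < v ↔ f u < f v := by
      intro u v
      rw [lt_iff_le_not_ge, lt_iff_le_not_ge]
      exact Iff.rfl
    set n := Fintype.card V with hn
    let E : Fin n ≃o V := monoEquivOfFin V rfl
    set α := {e : Sym2 V // e ∈ G.edgeFinset ∧ e ∉ S} with hα
    -- every remaining edge joins consecutive vertices in the order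
    have cover : ∀ (t : α) (u v : V), t.val = s(u, v) → u < v → ∀ w, ¬(u < w ∧ w < v) := by
      rintro t u v ht huv w ⟨hw1, hw2⟩
      have hmem := hfrow t u w v ((hlt u w).1 hw1) ((hlt w v).1 hw2)
        (by simp [ht]) (by simp [ht])
      have : w ∈ t.val := by simpa using hmem
      rw [ht, Sym2.mem_iff] at this
      rcases this with rfl | rfl
      · exact lt_irrefl w hw1
      · exact lt_irrefl w hw2
    have stepA : ∀ t : α, ∃ (i : ℕ) (h : i + 1 < n),
        t.val = s(E ⟨i, by omega⟩, E ⟨i + 1, h⟩) := by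
      rintro ⟨et, het⟩
      induction et using Sym2.ind with
      | _ u v =>
        have hne : u ≠ v := by
          intro h
          exact G.not_isDiag_of_mem_edgeFinset het.1 (by simp [h])
        -- order u, v
        have key : ∀ u v : V, s(u, v) = s(u, v) → u < v →
            (∀ hmem : s(u,v) ∈ G.edgeFinset ∧ s(u,v) ∉ S, ∃ (i : ℕ) (h : i + 1 < n),
              (⟨s(u,v), hmem⟩ : α).val = s(E ⟨i, by omega⟩, E ⟨i + 1, h⟩)) := by
          clear het hne
          intro u v _ huv hmem
          have hcov := cover ⟨s(u,v), hmem⟩ u v rfl huv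
          set i := E.symm u with hi
          set j := E.symm v with hj
          have hij : i < j := by
            rw [← E.lt_iff_lt, E.apply_symm_apply, E.apply_symm_apply]
            exact huv
          have hjlt : (j : ℕ) < n := j.2
          have hEi : E i = u := E.apply_symm_apply u
          have hEj : E j = v := E.apply_symm_apply v
          have hsucc : (j : ℕ) = (i : ℕ) + 1 := by
            by_contra hc
            have h1 : (i : ℕ) + 1 < (j : ℕ) := by
              have := (Fin.lt_iff_val_lt_val.1 hij)
              omega
            have hk : ((i : ℕ) + 1) < n := by omega
            refine hcov (E ⟨(i : ℕ) + 1, hk⟩) ⟨?_, ?_⟩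
            · rw [← hEi, E.lt_iff_lt]
              exact Fin.lt_iff_val_lt_val.2 (by simp)
            · rw [← hEj, E.lt_iff_lt]
              exact Fin.lt_iff_val_lt_val.2 (by simpa using h1)
          refine ⟨(i : ℕ), by omega, ?_⟩
          have h1 : E ⟨(i : ℕ), by omega⟩ = u := by
            have h' : (⟨(i : ℕ), by omega⟩ : Fin n) = i := Fin.ext rfl
            rw [h', hEi]
          have h2 : E ⟨(i : ℕ) + 1, by omega⟩ = v := by
            have h' : (⟨(i : ℕ) + 1, by omega⟩ : Fin n) = j := Fin.ext hsucc.symm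
            rw [h', hEj]
          simp only [h1, h2]
        rcases lt_or_gt_of_ne (fun h : u = v => hne h) with h | h
        · exact key u v rfl h het
        · have h2 : s(u, v) = s(v, u) := Sym2.eq_swap
          have het' : s(v,u) ∈ G.edgeFinset ∧ s(v,u) ∉ S := by rw [← h2]; exact het
          obtain ⟨i, hi, hspec⟩ := key v u rfl h het'
          refine ⟨i, hi, ?_⟩
          show s(u, v) = _
          rw [h2]
          exact hspec
    -- counting: the remaining edges are exactly n - 1 many
    have hcardα : Fintype.card α = n - 1 := by
      have h1 : Fintype.card α = (G.edgeFinset \ S).card := by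
        rw [Fintype.card_subtype]
        congr 1
        ext e
        simp [Finset.mem_sdiff]
      rw [h1, Finset.card_sdiff_of_subset hSsub, hScard]
      omega
    let g : α → Fin (n - 1) := fun t => ⟨(stepA t).choose, by
      have := (stepA t).choose_spec.choose
      omega⟩
    have hginj : Function.Injective g := by
      intro t1 t2 h
      obtain ⟨h1, hs1⟩ := (stepA t1).choose_spec
      obtain ⟨h2, hs2⟩ := (stepA t2).choose_spec
      have hval : (stepA t1).choose = (stepA t2).choose := by
        have := congrArg Fin.val h
        simpa [g] using this
      apply Subtype.ext
      rw [hs1, hs2]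
      have e1 : (⟨(stepA t1).choose, by omega⟩ : Fin n) = ⟨(stepA t2).choose, by omega⟩ :=
        Fin.ext hval
      have e2 : (⟨(stepA t1).choose + 1, h1⟩ : Fin n) = ⟨(stepA t2).choose + 1, h2⟩ :=
        Fin.ext (by simp [hval])
      rw [e1, e2]
    have hgbij : Function.Bijective g := by
      rw [Fintype.bijective_iff_injective_and_card]
      refine ⟨hginj, ?_⟩
      simp [hcardα]
    -- all consecutive pairs are adjacent
    have adj : ∀ (k : ℕ) (hk : k + 1 < n), G.Adj (E ⟨k, by omega⟩) (E ⟨k + 1, hk⟩) := by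
      intro k hk
      obtain ⟨t, ht⟩ := hgbij.2 ⟨k, by omega⟩
      obtain ⟨hlt', hspec⟩ := (stepA t).choose_spec
      have hkk : (stepA t).choose = k := by
        have := congrArg Fin.val ht
        simpa [g] using this
      rw [← SimpleGraph.mem_edgeSet, ← SimpleGraph.mem_edgeFinset]
      have := t.2.1
      rw [hspec] at this
      subst hkk
      convert this using 3
    -- build the Hamiltonian path
    let L : List V := (List.finRange n).map E
    have hLlen : L.length = n := by simp [L]
    have hLget : ∀ (k : ℕ) (hk : k < n), L[k]'(by omega) = E ⟨k, hk⟩ := by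
      intro k hk
      simp [L]
    have hchain : List.Chain' G.Adj L := by
      refine List.isChain_iff_getElem.2 ?_
      intro i hi
      have hi' : i + 1 < n := by omega
      rw [hLget i (by omega), hLget (i+1) hi']
      exact adj i hi'
    have hLne : L ≠ [] := by
      intro h
      rw [h] at hLlen
      simp at hLlen
      omega
    obtain ⟨a, l, hal⟩ : ∃ a l, L = a :: l := List.exists_cons_of_ne_nil hLne
    have hchain2 : List.Chain G.Adj a l := by
      rw [hal] at hchain
      exact hchain
    obtain ⟨b, p, hsup⟩ := walk_of_chain' l a hchain2
    refine ⟨a, b, p, ?_⟩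
    intro v
    rw [hsup, ← hal]
    have hLnd : L.Nodup := (List.nodup_finRange n).map E.injective
    have hLmem : v ∈ L := by
      have : v = E (E.symm v) := (E.apply_symm_apply v).symm
      rw [this]
      exact List.mem_map_of_mem (List.mem_finRange _)
    exact List.count_eq_one_of_mem hLnd hLmem
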